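/- arXiv:2401.15826 — 2 statements merged into one kernel-verified Lean document; each statement's English description precedes it below -/
import Mathlib

section
/- Consider a controllable discrete-time LTI system x(k+1) = A x(k) + B u(k), y(k) = C x(k) + D u(k) with state dimension ñ. Suppose a length-T input/output data trajectory (u_d, y_d) is collected and the matrix H₀ = col(H₁(x_{d,1:T−L+1}), H_L(u_d)) has full row rank, where x_d is the corresponding state trajectory. Then for every initial state x₀ ∈ ℝ^{ñ} and every input sequence u ∈ ℝ^{m̃L}, there exists g ∈ ℝ^{T−L+1} such that the length-L input/output trajectory generated from x₀ under u equals col(H_L(u_d), H_L(y_d)) g. -/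
/-- Fundamental-lemma style data-driven representation: for a controllable LTI
system, if the matrix `H₀ = col(H₁(x_d), H_L(u_d))` built from a length-`T`
data trajectory has full row rank, then every length-`L` input/output
trajectory of the system is a linear combination of the columns of the stacked
Hankel matrix `col(H_L(u_d), H_L(y_d))`. -/
theorem stmt_14 {ns ms ps T L : ℕ} (hL : 1 ≤ L) (hLT : L ≤ T)
    (A : Matrix (Fin ns) (Fin ns) ℝ) (B : Matrix (Fin ns) (Fin ms) ℝ)
    (C : Matrix (Fin ps) (Fin ns) ℝ) (D : Matrix (Fin ps) (Fin ms) ℝ)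
    (hctrb : (Matrix.of fun (i : Fin ns) (jk : Fin ns × Fin ms) =>
        (A ^ (jk.1 : ℕ) * B) i jk.2).rank = ns)
    (ud : ℕ → Fin ms → ℝ) (xd : ℕ → Fin ns → ℝ) (yd : ℕ → Fin ps → ℝ)
    (hdyn : ∀ k, k + 1 < T → xd (k + 1) = A.mulVec (xd k) + B.mulVec (ud k))
    (hout : ∀ k, k < T → yd k = C.mulVec (xd k) + D.mulVec (ud k))
    (hrank : (Matrix.of fun (r : Fin ns ⊕ Fin L × Fin ms) (j : Fin (T - L + 1)) =>
        Sum.elim (fun s => xd j.1 s) (fun ia => ud (ia.1.1 + j.1) ia.2) r).rank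
        = ns + L * ms) :
    ∀ (x0 : Fin ns → ℝ) (u : ℕ → Fin ms → ℝ) (x : ℕ → Fin ns → ℝ),
      x 0 = x0 → (∀ k, x (k + 1) = A.mulVec (x k) + B.mulVec (u k)) →
      ∃ g : Fin (T - L + 1) → ℝ, ∀ i < L,
        (u i = ∑ j : Fin (T - L + 1), g j • ud (i + j.1)) ∧
        (C.mulVec (x i) + D.mulVec (u i) = ∑ j : Fin (T - L + 1), g j • yd (i + j.1)) := by
  intro x0 u x hx0 hxdyn
  classical
  set M : Matrix (Fin ns ⊕ Fin L × Fin ms) (Fin (T - L + 1)) ℝ :=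
    Matrix.of fun (r : Fin ns ⊕ Fin L × Fin ms) (j : Fin (T - L + 1)) =>
      Sum.elim (fun s => xd j.1 s) (fun ia => ud (ia.1.1 + j.1) ia.2) r with hMdef
  have hsurj : Function.Surjective M.mulVec := by
    have htop : LinearMap.range M.mulVecLin = ⊤ := by
      apply Submodule.eq_top_of_finrank_eq
      rw [← Matrix.rank, hrank, Module.finrank_fintype_fun_eq_card]
      simp [mul_comm]
    intro v
    exact (LinearMap.range_eq_top.mp htop) v
  obtain ⟨g, hg⟩ := hsurj (Sum.elim x0 fun ia => u ia.1.1 ia.2)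
  refine ⟨g, ?_⟩
  -- input part
  have hu : ∀ i, i < L → u i = ∑ j : Fin (T - L + 1), g j • ud (i + j.1) := by
    intro i hi
    funext a
    have := congrFun hg (Sum.inr (⟨⟨i, hi⟩, a⟩ : Fin L × Fin ms))
    simp only [Matrix.mulVec, dotProduct, hMdef, Matrix.of_apply, Sum.elim_inr,
      Sum.elim_inl] at this
    rw [← this]
    simp [dotProduct, Finset.sum_apply, mul_comm]
  -- state part
  have hx : ∀ i, i < L → x i = ∑ j : Fin (T - L + 1), g j • xd (i + j.1) := by
    intro i
    induction i with
    | zero =>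
      intro _
      funext s
      have := congrFun hg (Sum.inl s)
      simp only [Matrix.mulVec, dotProduct, hMdef, Matrix.of_apply, Sum.elim_inl] at this
      rw [hx0]
      rw [← this]
      simp [dotProduct, Finset.sum_apply, mul_comm]
    | succ i ih =>
      intro hi
      have hiL : i < L := Nat.lt_of_succ_lt hi
      have hxi := ih hiL
      have hui := hu i hiL
      rw [hxdyn i, hxi, hui]
      have hA : A.mulVec (∑ j : Fin (T - L + 1), g j • xd (i + j.1))
          = ∑ j : Fin (T - L + 1), g j • A.mulVec (xd (i + j.1)) := by
        rw [← Matrix.mulVecLin_apply, map_sum]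
        simp [Matrix.mulVecLin_apply]
      have hB : B.mulVec (∑ j : Fin (T - L + 1), g j • ud (i + j.1))
          = ∑ j : Fin (T - L + 1), g j • B.mulVec (ud (i + j.1)) := by
        rw [← Matrix.mulVecLin_apply, map_sum]
        simp [Matrix.mulVecLin_apply]
      rw [hA, hB, ← Finset.sum_add_distrib]
      refine Finset.sum_congr rfl fun j _ => ?_
      rw [← smul_add]
      congr 1
      have hlt : i + j.1 + 1 < T := by omega
      have := hdyn (i + j.1) hlt
      rw [show i + 1 + j.1 = i + j.1 + 1 by omega, this]
  intro i hi
  refine ⟨hu i hi, ?_⟩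
  rw [hx i hi, hu i hi]
  have hC : C.mulVec (∑ j : Fin (T - L + 1), g j • xd (i + j.1))
      = ∑ j : Fin (T - L + 1), g j • C.mulVec (xd (i + j.1)) := by
    rw [← Matrix.mulVecLin_apply, map_sum]; simp [Matrix.mulVecLin_apply]
  have hD : D.mulVec (∑ j : Fin (T - L + 1), g j • ud (i + j.1))
      = ∑ j : Fin (T - L + 1), g j • D.mulVec (ud (i + j.1)) := by
    rw [← Matrix.mulVecLin_apply, map_sum]; simp [Matrix.mulVecLin_apply]
  rw [hC, hD, ← Finset.sum_add_distrib]
  refine Finset.sum_congr rfl fun j _ => ?_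
  rw [← smul_add]
  congr 1
  have hlt : i + j.1 < T := by omega
  exact (hout (i + j.1) hlt).symm
end

section
/- Let T_L and O_L be as in the LTI trajectory structure, and suppose H₀ = col(H₁(x_{d,1:T−L+1}), H_L(u_d)) has full row rank ñ + m̃L. Then the column space of the stacked Hankel matrix col(H_L(u_d), H_L(y_d)) equals the column space of the matrix [[I_{m̃L}, 0],[T_L, O_L]], i.e., the span of the pre-collected trajectory columns is exactly the set of all length-L trajectories of the system. -/
open Matrix Finset

/-- `mulVec` commutes with finite sums of vectors. -/
lemma stmt_15_mulVec_sum {m n ι : Type*} [Fintype n] (s : Finset ι)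
    (A : Matrix m n ℝ) (f : ι → n → ℝ) :
    A.mulVec (∑ i ∈ s, f i) = ∑ i ∈ s, A.mulVec (f i) := by
  exact map_sum A.mulVecLin f s

/-- State evolution formula for an LTI system. -/
lemma stmt_15_state {ns ms T : ℕ}
    (A : Matrix (Fin ns) (Fin ns) ℝ) (B : Matrix (Fin ns) (Fin ms) ℝ)
    (ud : ℕ → Fin ms → ℝ) (xd : ℕ → Fin ns → ℝ)
    (hdyn : ∀ k, k + 1 < T → xd (k + 1) = A.mulVec (xd k) + B.mulVec (ud k)) :
    ∀ t k, k + t < T →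
      xd (k + t) = (A ^ t).mulVec (xd k)
        + ∑ i ∈ Finset.range t, ((A ^ (t - 1 - i)) * B).mulVec (ud (k + i)) := by
  intro t
  induction t with
  | zero => intro k hk; simp
  | succ t ih =>
    intro k hk
    have hk' : k + t < T := by omega
    have h1 : xd (k + (t + 1)) = A.mulVec (xd (k + t)) + B.mulVec (ud (k + t)) := by
      have := hdyn (k + t) (by omega)
      simpa [← add_assoc] using this
    rw [h1, ih k hk']
    rw [Matrix.mulVec_add]
    rw [Finset.sum_range_succ]
    have h2 : A.mulVec ((A ^ t).mulVec (xd k)) = (A ^ (t + 1)).mulVec (xd k) := by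
      rw [Matrix.mulVec_mulVec, ← pow_succ']
    have h3 : A.mulVec (∑ i ∈ Finset.range t, ((A ^ (t - 1 - i)) * B).mulVec (ud (k + i)))
        = ∑ i ∈ Finset.range t, ((A ^ (t + 1 - 1 - i)) * B).mulVec (ud (k + i)) := by
      rw [stmt_15_mulVec_sum]
      refine Finset.sum_congr rfl fun i hi => ?_
      have hi' : i < t := Finset.mem_range.mp hi
      rw [Matrix.mulVec_mulVec, ← Matrix.mul_assoc, ← pow_succ',
        show t - 1 - i + 1 = t + 1 - 1 - i from by omega]
    rw [h2, h3]
    have h4 : ((A ^ (t + 1 - 1 - t)) * B).mulVec (ud (k + t)) = B.mulVec (ud (k + t)) := by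
      simp
    rw [h4]
    abel

/-- Under full row rank of `H₀`, the column space of the stacked Hankel matrix
`col(H_L(u_d), H_L(y_d))` equals the column space of the block matrix
`[[I, 0], [T_L, O_L]]`, i.e., the span of the pre-collected trajectory columns
is exactly the set of all length-`L` trajectories of the system. -/
theorem stmt_15 {ns ms ps T L : ℕ} (hL : 1 ≤ L) (hLT : L ≤ T)
    (A : Matrix (Fin ns) (Fin ns) ℝ) (B : Matrix (Fin ns) (Fin ms) ℝ)
    (C : Matrix (Fin ps) (Fin ns) ℝ) (D : Matrix (Fin ps) (Fin ms) ℝ)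
    (ud : ℕ → Fin ms → ℝ) (xd : ℕ → Fin ns → ℝ) (yd : ℕ → Fin ps → ℝ)
    (hdyn : ∀ k, k + 1 < T → xd (k + 1) = A.mulVec (xd k) + B.mulVec (ud k))
    (hout : ∀ k, k < T → yd k = C.mulVec (xd k) + D.mulVec (ud k))
    (hrank : (Matrix.of fun (r : Fin ns ⊕ Fin L × Fin ms) (j : Fin (T - L + 1)) =>
        Sum.elim (fun s => xd j.1 s) (fun ia => ud (ia.1.1 + j.1) ia.2) r).rank
        = ns + L * ms) :
    LinearMap.range (Matrix.mulVecLin (Matrix.of fun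
        (r : Fin L × Fin ms ⊕ Fin L × Fin ps) (j : Fin (T - L + 1)) =>
        Sum.elim (fun ia => ud (ia.1.1 + j.1) ia.2)
          (fun ip => yd (ip.1.1 + j.1) ip.2) r)) =
    LinearMap.range (Matrix.mulVecLin (Matrix.of fun
        (r : Fin L × Fin ms ⊕ Fin L × Fin ps) (c : Fin L × Fin ms ⊕ Fin ns) =>
        Sum.elim
          (fun ia => Sum.elim
            (fun jb : Fin L × Fin ms => if ia = jb then (1 : ℝ) else 0)
            (fun _ : Fin ns => (0 : ℝ)) c)
          (fun ip => Sum.elim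
            (fun jb : Fin L × Fin ms =>
              if (jb.1 : ℕ) < (ip.1 : ℕ) then
                (C * A ^ ((ip.1 : ℕ) - (jb.1 : ℕ) - 1) * B) ip.2 jb.2
              else if (ip.1 : ℕ) = (jb.1 : ℕ) then D ip.2 jb.2 else 0)
            (fun s : Fin ns => (C * A ^ (ip.1 : ℕ)) ip.2 s) c) r)) := by
  classical
  set H₀ : Matrix (Fin ns ⊕ Fin L × Fin ms) (Fin (T - L + 1)) ℝ :=
    (Matrix.of fun (r : Fin ns ⊕ Fin L × Fin ms) (j : Fin (T - L + 1)) =>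
        Sum.elim (fun s => xd j.1 s) (fun ia => ud (ia.1.1 + j.1) ia.2) r) with hH₀
  set M : Matrix (Fin L × Fin ms ⊕ Fin L × Fin ps) (Fin L × Fin ms ⊕ Fin ns) ℝ :=
    (Matrix.of fun
        (r : Fin L × Fin ms ⊕ Fin L × Fin ps) (c : Fin L × Fin ms ⊕ Fin ns) =>
        Sum.elim
          (fun ia => Sum.elim
            (fun jb : Fin L × Fin ms => if ia = jb then (1 : ℝ) else 0)
            (fun _ : Fin ns => (0 : ℝ)) c)
          (fun ip => Sum.elim
            (fun jb : Fin L × Fin ms =>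
              if (jb.1 : ℕ) < (ip.1 : ℕ) then
                (C * A ^ ((ip.1 : ℕ) - (jb.1 : ℕ) - 1) * B) ip.2 jb.2
              else if (ip.1 : ℕ) = (jb.1 : ℕ) then D ip.2 jb.2 else 0)
            (fun s : Fin ns => (C * A ^ (ip.1 : ℕ)) ip.2 s) c) r) with hM
  set H₀' : Matrix (Fin L × Fin ms ⊕ Fin ns) (Fin (T - L + 1)) ℝ :=
    H₀.submatrix (Equiv.sumComm (Fin L × Fin ms) (Fin ns)) id with hH₀'
  -- Step 1: the Hankel matrix factors as M * H₀'
  have hfac : (Matrix.of fun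
        (r : Fin L × Fin ms ⊕ Fin L × Fin ps) (j : Fin (T - L + 1)) =>
        Sum.elim (fun ia => ud (ia.1.1 + j.1) ia.2)
          (fun ip => yd (ip.1.1 + j.1) ip.2) r) = M * H₀' := by
    ext r j
    rw [Matrix.mul_apply]
    rw [Fintype.sum_sum_type]
    cases r with
    | inl ia =>
      simp only [hM, hH₀', hH₀, Matrix.of_apply, Sum.elim_inl, Sum.elim_inr,
        Matrix.submatrix_apply, Equiv.sumComm_apply, Sum.swap_inl, Sum.swap_inr, id_eq,
        zero_mul, Finset.sum_const_zero, add_zero]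
      rw [Finset.sum_eq_single ia]
      · simp
      · intro b _ hb; simp [Ne.symm hb]
      · simp
    | inr ip =>
      simp only [hM, hH₀', hH₀, Matrix.of_apply, Sum.elim_inl, Sum.elim_inr,
        Matrix.submatrix_apply, Equiv.sumComm_apply, Sum.swap_inl, Sum.swap_inr, id_eq]
      -- LHS: yd (ip.1 + j)
      have hjT : (j : ℕ) ≤ T - L := by omega
      have hipT : (ip.1 : ℕ) + (j : ℕ) < T := by
        have := ip.1.isLt; omega
      rw [hout _ hipT]
      have hx : ((ip.1 : ℕ) + (j : ℕ)) = (j : ℕ) + (ip.1 : ℕ) := by omega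
      rw [hx]
      rw [stmt_15_state A B ud xd hdyn (ip.1 : ℕ) (j : ℕ) (by omega)]
      -- expand
      rw [Matrix.mulVec_add, Matrix.mulVec_mulVec, stmt_15_mulVec_sum]
      simp only [Pi.add_apply, Finset.sum_apply]
      -- second big sum equals C * A^ip.1 applied to xd j
      have hstate : (∑ s, (C * A ^ (ip.1 : ℕ)) ip.2 s * xd (j : ℕ) s)
          = (C * A ^ (ip.1 : ℕ)).mulVec (xd (j : ℕ)) ip.2 := by
        rw [Matrix.mulVec]
        rfl
      rw [hstate]
      -- the input-sum part
      have hinp : (∑ jb : Fin L × Fin ms,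
          (if (jb.1 : ℕ) < (ip.1 : ℕ) then
            (C * A ^ ((ip.1 : ℕ) - (jb.1 : ℕ) - 1) * B) ip.2 jb.2
           else if (ip.1 : ℕ) = (jb.1 : ℕ) then D ip.2 jb.2 else 0)
            * ud ((jb.1 : ℕ) + (j : ℕ)) jb.2)
          = (∑ i ∈ Finset.range (ip.1 : ℕ),
              (C.mulVec (((A ^ ((ip.1 : ℕ) - 1 - i)) * B).mulVec (ud ((j : ℕ) + i)))) ip.2)
            + D.mulVec (ud ((j : ℕ) + (ip.1 : ℕ))) ip.2 := by
        rw [Fintype.sum_prod_type]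
        rw [Fin.sum_univ_eq_sum_range
          (fun b => ∑ a : Fin ms,
            (if b < (ip.1 : ℕ) then
              (C * A ^ ((ip.1 : ℕ) - b - 1) * B) ip.2 a
             else if (ip.1 : ℕ) = b then D ip.2 a else 0) * ud (b + (j : ℕ)) a) L]
        have hsplit : Finset.range L = Finset.range ((ip.1 : ℕ) + 1) ∪
            Finset.Ico ((ip.1 : ℕ) + 1) L := by
          rw [Finset.range_eq_Ico, Finset.range_eq_Ico]
          exact (Finset.Ico_union_Ico_eq_Ico (a := 0) (b := (ip.1 : ℕ) + 1) (c := L) (Nat.zero_le _) ip.1.isLt).symm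
        rw [hsplit, Finset.sum_union (by
          rw [Finset.range_eq_Ico]
          exact Finset.Ico_disjoint_Ico_consecutive 0 _ _)]
        have hzero : ∑ b ∈ Finset.Ico ((ip.1 : ℕ) + 1) L,
            (∑ a : Fin ms,
            (if b < (ip.1 : ℕ) then
              (C * A ^ ((ip.1 : ℕ) - b - 1) * B) ip.2 a
             else if (ip.1 : ℕ) = b then D ip.2 a else 0) * ud (b + (j : ℕ)) a) = 0 := by
          refine Finset.sum_eq_zero fun b hb => ?_
          have hb' : (ip.1 : ℕ) < b := by
            have := Finset.mem_Ico.mp hb; omega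
          refine Finset.sum_eq_zero fun a _ => ?_
          rw [if_neg (by omega), if_neg (by omega), zero_mul]
        rw [hzero, add_zero, Finset.sum_range_succ]
        congr 1
        · refine Finset.sum_congr rfl fun b hb => ?_
          have hb' : b < (ip.1 : ℕ) := Finset.mem_range.mp hb
          rw [Matrix.mulVec_mulVec, ← Matrix.mul_assoc]
          rw [Matrix.mulVec]
          simp only [dotProduct]
          refine Finset.sum_congr rfl fun a _ => ?_
          rw [if_pos hb',
            show (ip.1 : ℕ) - b - 1 = (ip.1 : ℕ) - 1 - b from by omega,
            Nat.add_comm b (j : ℕ)]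
        · simp only [lt_irrefl, if_neg (lt_irrefl _), if_pos rfl]
          rw [Matrix.mulVec]
          simp only [dotProduct]
          refine Finset.sum_congr rfl fun a _ => ?_
          rw [Nat.add_comm (ip.1 : ℕ) (j : ℕ)]
          simp
      rw [hinp]
      ring
  -- Step 2: H₀' has surjective mulVecLin
  have hsurj0 : Function.Surjective H₀.mulVecLin := by
    rw [← LinearMap.range_eq_top]
    apply Submodule.eq_top_of_finrank_eq
    have h2 : Module.finrank ℝ (LinearMap.range H₀.mulVecLin) = ns + L * ms := hrank
    rw [h2, Module.finrank_pi]
    simp [Fintype.card_sum, Fintype.card_prod]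
  have hsurj : LinearMap.range H₀'.mulVecLin = ⊤ := by
    rw [LinearMap.range_eq_top]
    intro w
    obtain ⟨v, hv⟩ := hsurj0 (w ∘ (Equiv.sumComm (Fin L × Fin ms) (Fin ns)).symm)
    refine ⟨v, ?_⟩
    funext c
    have : H₀.mulVecLin v ((Equiv.sumComm (Fin L × Fin ms) (Fin ns)) c)
        = w c := by rw [hv]; simp
    simpa [hH₀', Matrix.mulVecLin_apply, Matrix.mulVec, dotProduct] using this
  rw [hfac, Matrix.mulVecLin_mul]
  exact LinearMap.range_comp_of_range_eq_top _ hsurj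
end
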